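/- Let {c_k}_{k≥1} be a real sequence with 0 < c_* ≤ c_k ≤ c^* < 1 for all k ≥ 1, and set δ_0 = 1, δ_k = c_1c_2⋯c_k. Fix 0 < θ < 1 and for k ≥ 1 let l(θ,k) = max{l ∈ ℤ^+ : δ_l ≥ (δ_k)^{1/θ}} (a finite maximum since δ_l → 0). Then sup_{k≥2} ( l(θ,k) − l(θ,k−1) ) < +∞. -/
import Mathlib


open Metric Filter Set
open scoped ENNReal

/-- `moranDelta c k = c₁c₂⋯cₖ`, with `moranDelta c 0 = 1`. -/
noncomputable def moranDelta (c : ℕ → ℝ) (k : ℕ) : ℝ :=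
  ∏ i ∈ Finset.Icc 1 k, c i

/-- `lfun c θ k = max {l ∈ ℤ⁺ : δ_l ≥ (δ_k)^{1/θ}}`. -/
noncomputable def lfun (c : ℕ → ℝ) (θ : ℝ) (k : ℕ) : ℕ :=
  sSup {l : ℕ | 1 ≤ l ∧ moranDelta c k ^ (1 / θ) ≤ moranDelta c l}

section aux

variable {c : ℕ → ℝ} {cs cS : ℝ}

lemma md_pos (hcs : 0 < cs) (hc : ∀ k, 1 ≤ k → cs ≤ c k ∧ c k ≤ cS) (k : ℕ) :
    0 < moranDelta c k := by
  refine Finset.prod_pos fun i hi => ?_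
  exact lt_of_lt_of_le hcs (hc i (Finset.mem_Icc.mp hi).1).1

lemma md_succ (c : ℕ → ℝ) (k : ℕ) :
    moranDelta c (k + 1) = moranDelta c k * c (k + 1) := by
  unfold moranDelta
  rw [Finset.prod_Icc_succ_top (Nat.one_le_iff_ne_zero.mpr (Nat.succ_ne_zero k))]

lemma md_add_le (hcs : 0 < cs) (hc : ∀ k, 1 ≤ k → cs ≤ c k ∧ c k ≤ cS)
    (a m : ℕ) : moranDelta c (a + m) ≤ moranDelta c a * cS ^ m := by
  induction m with
  | zero => simp
  | succ n ih =>
      have h1 : moranDelta c (a + (n + 1)) = moranDelta c (a + n) * c (a + n + 1) := by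
        rw [← md_succ c (a + n)]; ring_nf
      rw [h1, pow_succ, ← mul_assoc]
      have hcle := (hc (a + n + 1) (Nat.le_add_left 1 (a+n))).2
      have hpos := md_pos hcs hc (a + n)
      have hc0 : 0 ≤ c (a + n + 1) :=
        le_of_lt (lt_of_lt_of_le hcs (hc (a + n + 1) (Nat.le_add_left 1 (a+n))).1)
      calc moranDelta c (a + n) * c (a + n + 1)
          ≤ (moranDelta c a * cS ^ n) * c (a + n + 1) := by
            exact mul_le_mul_of_nonneg_right ih hc0
        _ ≤ (moranDelta c a * cS ^ n) * cS := by
            refine mul_le_mul_of_nonneg_left hcle ?_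
            have h0 := md_pos hcs hc a
            have hcS0 : 0 < cS :=
              lt_of_lt_of_le hcs (le_trans (hc 1 le_rfl).1 (hc 1 le_rfl).2)
            positivity

lemma md_le_pow (hcs : 0 < cs) (hc : ∀ k, 1 ≤ k → cs ≤ c k ∧ c k ≤ cS)
    (k : ℕ) : moranDelta c k ≤ cS ^ k := by
  have := md_add_le hcs hc 0 k
  simpa [moranDelta] using this

end aux

/-- If `0 < c∗ ≤ c_k ≤ c* < 1` for all `k ≥ 1`, then for fixed `0 < θ < 1`,
`sup_{k≥2} (l(θ,k) − l(θ,k−1)) < +∞`. -/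
theorem lfun_increments_bounded (c : ℕ → ℝ) (cs cS : ℝ)
    (hcs : 0 < cs) (hcS : cS < 1)
    (hc : ∀ k, 1 ≤ k → cs ≤ c k ∧ c k ≤ cS)
    (θ : ℝ) (hθ0 : 0 < θ) (hθ1 : θ < 1) :
    ∃ B : ℕ, ∀ k, 2 ≤ k → lfun c θ k - lfun c θ (k - 1) ≤ B := by
  have hcsS : cs ≤ cS := le_trans (hc 1 le_rfl).1 (hc 1 le_rfl).2
  have hcS0 : 0 < cS := lt_of_lt_of_le hcs hcsS
  have hδpos : ∀ k, 0 < moranDelta c k := md_pos hcs hc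
  have hδle1 : ∀ k, moranDelta c k ≤ 1 := by
    intro k
    calc moranDelta c k ≤ cS ^ k := md_le_pow hcs hc k
      _ ≤ 1 := pow_le_one₀ hcS0.le hcS.le
  have hθinv : (1:ℝ) ≤ 1 / θ := by
    rw [le_div_iff₀ hθ0]; linarith
  -- the set S k
  set S : ℕ → Set ℕ := fun k => {l : ℕ | 1 ≤ l ∧ moranDelta c k ^ (1 / θ) ≤ moranDelta c l}
    with hS
  have hrpow_le_self : ∀ k, moranDelta c k ^ (1 / θ) ≤ moranDelta c k := by
    intro k
    have := Real.rpow_le_rpow_of_exponent_ge (hδpos k) (hδle1 k) hθinv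
    simpa [Real.rpow_one] using this
  have hmem1 : ∀ k, 1 ≤ k → 1 ∈ S k := by
    intro k hk
    refine ⟨le_rfl, ?_⟩
    have h2 : moranDelta c k ≤ moranDelta c 1 := by
      have := md_add_le hcs hc 1 (k - 1)
      rw [Nat.add_sub_cancel' hk] at this
      calc moranDelta c k ≤ moranDelta c 1 * cS ^ (k-1) := this
        _ ≤ moranDelta c 1 * 1 := by
            exact mul_le_mul_of_nonneg_left (pow_le_one₀ hcS0.le hcS.le) (hδpos 1).le
        _ = moranDelta c 1 := mul_one _
    exact le_trans (hrpow_le_self k) h2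
  have hbdd : ∀ k, BddAbove (S k) := by
    intro k
    have hε : (0:ℝ) < moranDelta c k ^ (1 / θ) := Real.rpow_pos_of_pos (hδpos k) _
    obtain ⟨N, hN⟩ := exists_pow_lt_of_lt_one hε hcS
    refine ⟨N, fun l hl => ?_⟩
    by_contra hlN
    push_neg at hlN
    have h1 : moranDelta c l ≤ cS ^ l := md_le_pow hcs hc l
    have h2 : cS ^ l ≤ cS ^ N := pow_le_pow_of_le_one hcS0.le hcS.le hlN.le
    have := hl.2
    linarith
  -- choose B with cS ^ B < cs ^ (1/θ)
  have hcspos : (0:ℝ) < cs ^ (1 / θ) := Real.rpow_pos_of_pos hcs _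
  obtain ⟨B, hB⟩ := exists_pow_lt_of_lt_one hcspos hcS
  refine ⟨B, fun k hk => ?_⟩
  set k' := k - 1 with hk'
  have hk'1 : 1 ≤ k' := Nat.le_sub_one_of_lt hk
  have hkk' : k = k' + 1 := (Nat.succ_pred_eq_of_pos (by omega)).symm
  set L := lfun c θ k' with hLdef
  set L' := lfun c θ k with hL'def
  have hLmem : L ∈ S k' := Nat.sSup_mem ⟨1, hmem1 k' hk'1⟩ (hbdd k')
  have hL'mem : L' ∈ S k := Nat.sSup_mem ⟨1, hmem1 k (by omega)⟩ (hbdd k)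
  have hL1 : moranDelta c (L + 1) < moranDelta c k' ^ (1 / θ) := by
    by_contra h
    push_neg at h
    have : L + 1 ∈ S k' := ⟨by omega, h⟩
    have h2 := le_csSup (hbdd k') this
    have h3 : sSup (S k') = L := rfl
    omega
  -- suppose L' > L + B
  by_contra hcon
  push_neg at hcon
  have hL'big : L + 1 + B ≤ L' := by omega
  -- upper bound on δ L'
  have hub : moranDelta c L' ≤ moranDelta c (L + 1) * cS ^ B := by
    obtain ⟨m, hm⟩ := Nat.exists_eq_add_of_le hL'big
    calc moranDelta c L' = moranDelta c (L + 1 + (B + m)) := by rw [hm]; ring_nf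
      _ ≤ moranDelta c (L + 1) * cS ^ (B + m) := md_add_le hcs hc _ _
      _ ≤ moranDelta c (L + 1) * cS ^ B := by
          refine mul_le_mul_of_nonneg_left ?_ (hδpos _).le
          exact pow_le_pow_of_le_one hcS0.le hcS.le (by omega)
  -- lower bound on δ L'
  have hck := hc k (by omega)
  have hck0 : 0 < c k := lt_of_lt_of_le hcs hck.1
  have hsplit : moranDelta c k ^ (1 / θ) =
      moranDelta c k' ^ (1 / θ) * c k ^ (1 / θ) := by
    have hck0' : (0:ℝ) ≤ c (k' + 1) := by rw [← hkk']; exact hck0.le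
    rw [hkk', md_succ, Real.mul_rpow (hδpos k').le hck0', ← hkk']
  have hlb : moranDelta c (L + 1) * cs ^ (1 / θ) < moranDelta c L' := by
    have h1 : cs ^ (1 / θ) ≤ c k ^ (1 / θ) :=
      Real.rpow_le_rpow hcs.le hck.1 (by linarith)
    have h2 : moranDelta c (L + 1) * c k ^ (1 / θ)
        < moranDelta c k' ^ (1 / θ) * c k ^ (1 / θ) := by
      exact mul_lt_mul_of_pos_right hL1 (Real.rpow_pos_of_pos hck0 _)
    calc moranDelta c (L + 1) * cs ^ (1 / θ)
        ≤ moranDelta c (L + 1) * c k ^ (1 / θ) :=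
          mul_le_mul_of_nonneg_left h1 (hδpos _).le
      _ < moranDelta c k ^ (1 / θ) := by rw [hsplit]; exact h2
      _ ≤ moranDelta c L' := hL'mem.2
  have hfinal : moranDelta c (L + 1) * cS ^ B < moranDelta c (L + 1) * cs ^ (1 / θ) :=
    mul_lt_mul_of_pos_left hB (hδpos _)
  linarith
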